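/- Let λ ∈ ℂ ∪ {∞}, let X denote either A or B, and let W_X(λ) be the Lie algebra defined below with basis {L_n, X_n : n ∈ ℤ}. Then every symmetric invariant bilinear form θ on W_X(λ) satisfies: θ(L_n, L_m) = 0 for all n, m ∈ ℤ; θ(L_n, X_m) = 0 whenever n + m ≠ 0; and θ(X_n, X_m) = 0 for all (n, m) ∈ ℤ² with (n, m) ≠ (0, 0). -/

import Mathlib

/-- The coefficient `n(n+1)λ`, where `λ = ∞` (encoded by `none`) gives `n²`. -/
def lamTerm (lam : Option ℂ) (n : ℤ) : ℂ :=
  match lam with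
  | some l => (n : ℂ) * ((n : ℂ) + 1) * l
  | none => (n : ℂ) ^ 2

/-- Structure constant for the bracket `[L_n, A_m]` in `W_A(λ)`. -/
def omegaA (lam : Option ℂ) (n m : ℤ) : ℂ :=
  (n : ℂ) + (m : ℂ) + (if m = 0 then lamTerm lam n else 0)

/-- Structure constant for the bracket `[L_n, B_m]` in `W_B(λ)`. -/
def omegaB (lam : Option ℂ) (n m : ℤ) : ℂ :=
  (m : ℂ) - (if n + m = 0 then lamTerm lam n else 0)

/-- any symmetric invariant bilinear form on `W_X(λ)` (for `X = A` or
`X = B`) vanishes on all pairs `(L_n, L_m)`, on all pairs `(L_n, X_m)` with `n + m ≠ 0`,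
and on all pairs `(X_n, X_m)` with `(n, m) ≠ (0, 0)`. -/
theorem stmt_10 (lam : Option ℂ) (L : Type) [LieRing L] [LieAlgebra ℂ L]
    (b : Module.Basis (ℤ ⊕ ℤ) ℂ L) (ω : ℤ → ℤ → ℂ)
    (hω : (∀ n m : ℤ, ω n m = omegaA lam n m) ∨ (∀ n m : ℤ, ω n m = omegaB lam n m))
    (hLL : ∀ n m : ℤ,
      ⁅b (Sum.inl n), b (Sum.inl m)⁆ = ((m : ℂ) - (n : ℂ)) • b (Sum.inl (n + m)))
    (hLX : ∀ n m : ℤ, ⁅b (Sum.inl n), b (Sum.inr m)⁆ = ω n m • b (Sum.inr (n + m)))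
    (hXX : ∀ n m : ℤ, ⁅b (Sum.inr n), b (Sum.inr m)⁆ = 0)
    (θ : L →ₗ[ℂ] L →ₗ[ℂ] ℂ)
    (hsymm : ∀ x y : L, θ x y = θ y x)
    (hinv : ∀ x y z : L, θ ⁅x, y⁆ z = θ x ⁅y, z⁆) :
    (∀ n m : ℤ, θ (b (Sum.inl n)) (b (Sum.inl m)) = 0) ∧
    (∀ n m : ℤ, n + m ≠ 0 → θ (b (Sum.inl n)) (b (Sum.inr m)) = 0) ∧
    (∀ n m : ℤ, ¬(n = 0 ∧ m = 0) → θ (b (Sum.inr n)) (b (Sum.inr m)) = 0) := by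
  have cancel : ∀ (c x : ℂ), c ≠ 0 → c * x = 0 → x = 0 := by
    intro c x hc h
    rcases mul_eq_zero.mp h with h | h
    · exact absurd h hc
    · exact h
  have h0 : lamTerm lam 0 = 0 := by
    cases lam <;> simp [lamTerm]
  have hω0 : ∀ s : ℤ, ω 0 s = (s : ℂ) := by
    intro s
    rcases hω with h | h
    · rw [h]; by_cases hs : s = 0 <;> simp [omegaA, hs, h0]
    · rw [h]; by_cases hs : s = 0 <;> simp [omegaB, hs, h0]
  -- key identities from invariance
  have keyLL : ∀ n m k : ℤ, ((m : ℂ) - n) * θ (b (Sum.inl (n + m))) (b (Sum.inl k))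
      = ((k : ℂ) - m) * θ (b (Sum.inl n)) (b (Sum.inl (m + k))) := by
    intro n m k
    have h := hinv (b (Sum.inl n)) (b (Sum.inl m)) (b (Sum.inl k))
    rw [hLL, hLL] at h
    simpa using h
  have keyLX : ∀ n k m : ℤ, ((k : ℂ) - n) * θ (b (Sum.inl (n + k))) (b (Sum.inr m))
      = ω k m * θ (b (Sum.inl n)) (b (Sum.inr (k + m))) := by
    intro n k m
    have h := hinv (b (Sum.inl n)) (b (Sum.inl k)) (b (Sum.inr m))
    rw [hLL, hLX] at h
    simpa using h
  have keyXX : ∀ k n m : ℤ, ω k n * θ (b (Sum.inr (k + n))) (b (Sum.inr m)) = 0 := by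
    intro k n m
    have h := hinv (b (Sum.inl k)) (b (Sum.inr n)) (b (Sum.inr m))
    rw [hLX, hXX] at h
    simpa using h
  -- Part 1 : θ(L_n, L_m) = 0
  have t0 : ∀ s : ℤ, s ≠ 0 → θ (b (Sum.inl 0)) (b (Sum.inl s)) = 0 := by
    intro s hs
    have h := keyLL 0 s 0
    rw [hsymm (b (Sum.inl (0 + s))) (b (Sum.inl 0))] at h
    simp only [zero_add, add_zero] at h
    have hs' : (s : ℂ) ≠ 0 := Int.cast_ne_zero.mpr hs
    exact cancel (2 * (s : ℂ)) _ (by simpa using hs') (by linear_combination h)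
  have cnn : ∀ n : ℤ, n ≠ 0 → θ (b (Sum.inl n)) (b (Sum.inl (-n))) = 0 := by
    intro n hn
    have h := keyLL n n (-2 * n)
    have hidx : n + -2 * n = -n := by ring
    rw [hidx] at h
    push_cast at h
    have hn' : (n : ℂ) ≠ 0 := Int.cast_ne_zero.mpr hn
    exact cancel (-3 * (n : ℂ)) _ (by simpa using hn') (by linear_combination -h)
  have c00 : θ (b (Sum.inl 0)) (b (Sum.inl 0)) = 0 := by
    have h := keyLL 0 1 (-1)
    norm_num at h
    have h1 : θ (b (Sum.inl 1)) (b (Sum.inl (-1))) = 0 := cnn 1 one_ne_zero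
    rw [h1] at h
    exact cancel 2 _ two_ne_zero (by linear_combination h)
  have partLL : ∀ n m : ℤ, θ (b (Sum.inl n)) (b (Sum.inl m)) = 0 := by
    intro n m
    by_cases hnm : n + m = 0
    · have hm : m = -n := by omega
      subst hm
      by_cases hn : n = 0
      · subst hn; simpa using c00
      · exact cnn n hn
    · by_cases hn : n = 0
      · subst hn
        exact t0 m (by omega)
      · have h := keyLL 0 n m
        rw [t0 (n + m) hnm] at h
        simp only [zero_add, mul_zero, sub_zero, Int.cast_zero] at h
        exact cancel (n : ℂ) _ (Int.cast_ne_zero.mpr hn) h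
  refine ⟨partLL, ?_, ?_⟩
  -- Part 2 : θ(L_n, X_m) = 0 for n + m ≠ 0
  · have g0 : ∀ s : ℤ, s ≠ 0 → θ (b (Sum.inl 0)) (b (Sum.inr s)) = 0 := by
      intro s hs
      have h := keyLX 0 0 s
      rw [hω0] at h
      simp only [zero_add, sub_zero, mul_zero, Int.cast_zero, zero_mul] at h
      exact cancel (s : ℂ) _ (Int.cast_ne_zero.mpr hs) h.symm
    intro n m hnm
    by_cases hn : n = 0
    · subst hn
      exact g0 m (by omega)
    · have h := keyLX 0 n m
      rw [g0 (n + m) hnm] at h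
      simp only [zero_add, mul_zero, sub_zero, Int.cast_zero] at h
      exact cancel (n : ℂ) _ (Int.cast_ne_zero.mpr hn) h
  -- Part 3 : θ(X_n, X_m) = 0 for (n,m) ≠ (0,0)
  · have hx : ∀ n m : ℤ, n ≠ 0 → θ (b (Sum.inr n)) (b (Sum.inr m)) = 0 := by
      intro n m hn
      have h := keyXX 0 n m
      rw [hω0] at h
      simp only [zero_add] at h
      exact cancel (n : ℂ) _ (Int.cast_ne_zero.mpr hn) h
    intro n m hnm
    by_cases hn : n = 0
    · have hm : m ≠ 0 := by tauto
      rw [hsymm]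
      exact hx m n hm
    · exact hx n m hn
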